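/- Let $\tau_0 := (\sqrt 5 - 1)/2$ and $\tau_{k+1} := \frac{\tau_k}{2}\big(\sqrt{\tau_k^2 + 4} - \tau_k\big)$ for $k \ge 0$. Then $\tau_k \in (0,1)$ for all $k$, the identity $\tau_{k+1}^2 = (1-\tau_{k+1})\tau_k^2$ holds, and the product $\beta_{k} := \beta_0 \prod_{i=0}^{k-1}(1-\tau_i)$ satisfies $\beta_k \le \frac{4\beta_0}{(k+2)^2}$ for all $k \ge 0$. -/

import Mathlib

set_option maxHeartbeats 2000000 in
/-- Step-size update for the strongly convex variant: `τ₀ = (√5-1)/2`,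
`τ_{k+1} = τ_k(√(τ_k²+4) - τ_k)/2`; then `τ_k ∈ (0,1)`, `τ_{k+1}² = (1-τ_{k+1})τ_k²`,
and `β_k := β₀ ∏_{i<k}(1-τ_i) ≤ 4β₀/(k+2)²`. -/
theorem strongly_convex_stepsize (τ : ℕ → ℝ) (β₀ : ℝ) (hβ₀ : 0 < β₀)
    (hτ0 : τ 0 = (Real.sqrt 5 - 1) / 2)
    (hτrec : ∀ k, τ (k+1) = τ k / 2 * (Real.sqrt ((τ k)^2 + 4) - τ k)) :
    (∀ k, τ k ∈ Set.Ioo (0:ℝ) 1) ∧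
    (∀ k, (τ (k+1))^2 = (1 - τ (k+1)) * (τ k)^2) ∧
    (∀ k : ℕ, β₀ * ∏ i ∈ Finset.range k, (1 - τ i) ≤ 4 * β₀ / ((k : ℝ) + 2)^2) := by
  have h5 : Real.sqrt 5 ^ 2 = 5 := Real.sq_sqrt (by norm_num)
  have h5pos : (1:ℝ) < Real.sqrt 5 := by nlinarith [Real.sqrt_nonneg 5]
  have h5lt : Real.sqrt 5 < 3 := by nlinarith [Real.sqrt_nonneg 5]
  have hid : ∀ k, (τ (k+1))^2 = (1 - τ (k+1)) * (τ k)^2 := by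
    intro k
    have hu : Real.sqrt ((τ k)^2 + 4) ^ 2 = (τ k)^2 + 4 := Real.sq_sqrt (by positivity)
    rw [hτrec k]; nlinarith [hu]
  have hpos : ∀ k, 0 < τ k ∧ τ k < 1 := by
    intro k
    induction k with
    | zero => constructor <;> (rw [hτ0]; nlinarith)
    | succ n ih =>
      obtain ⟨h0, h1⟩ := ih
      have hu2 : Real.sqrt ((τ n)^2 + 4) ^ 2 = (τ n)^2 + 4 := Real.sq_sqrt (by positivity)
      have hu : τ n < Real.sqrt ((τ n)^2 + 4) := by
        nlinarith [Real.sqrt_nonneg ((τ n)^2 + 4)]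
      have hs0 : 0 < τ (n+1) := by rw [hτrec n]; nlinarith
      refine ⟨hs0, ?_⟩
      have hI := hid n
      nlinarith [sq_nonneg (τ n)]
  have hbound : ∀ k : ℕ, τ k ≤ 2 / ((k:ℝ) + 3) := by
    intro k
    induction k with
    | zero => rw [hτ0]; push_cast; nlinarith
    | succ n ih =>
      obtain ⟨h0, h1⟩ := hpos n
      obtain ⟨hs0, hs1⟩ := hpos (n+1)
      have hI := hid n
      have hn : (0:ℝ) < (n:ℝ) + 3 := by positivity
      have hc : (0:ℝ) < (n:ℝ) + 4 := by positivity
      by_contra h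
      push_neg at h
      push_cast at h
      have ha : 2 < τ (n+1) * ((n:ℝ) + 4) := by
        rw [div_lt_iff₀ (by positivity : (0:ℝ) < (n:ℝ)+1+3)] at h; linarith
      have hb : τ n * ((n:ℝ) + 3) ≤ 2 := by
        rw [le_div_iff₀ hn] at ih; linarith
      have hb0 : 0 ≤ τ n * ((n:ℝ) + 3) := by positivity
      -- s²(n+4)² > 4, t²(n+3)² ≤ 4
      have h1' : 4 < (τ (n+1))^2 * ((n:ℝ)+4)^2 := by nlinarith
      have h2' : (τ n)^2 * ((n:ℝ)+3)^2 ≤ 4 := by nlinarith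
      -- (1-s)(n+4) < n+2
      have h3' : (1 - τ (n+1)) * ((n:ℝ)+4) < (n:ℝ) + 2 := by nlinarith
      have h4' : 0 < 1 - τ (n+1) := by linarith
      -- combine: s²(n+3)²(n+4)² = (1-s) t²(n+3)² (n+4)² ≤ 4(1-s)(n+4)² < 4(n+2)(n+4)
      have h5' : (τ (n+1))^2 * ((n:ℝ)+3)^2 * ((n:ℝ)+4)^2 < 4 * ((n:ℝ)+2) * ((n:ℝ)+4) := by
        calc (τ (n+1))^2 * ((n:ℝ)+3)^2 * ((n:ℝ)+4)^2
            = (1 - τ (n+1)) * ((τ n)^2 * ((n:ℝ)+3)^2) * ((n:ℝ)+4)^2 := by rw [hI]; ring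
          _ ≤ (1 - τ (n+1)) * 4 * ((n:ℝ)+4)^2 := by nlinarith
          _ < 4 * ((n:ℝ)+2) * ((n:ℝ)+4) := by nlinarith
      have h6' := mul_lt_mul_of_pos_right h1' (by positivity : (0:ℝ) < ((n:ℝ)+3)^2)
      have hexp : ((n:ℝ)+2)*((n:ℝ)+4) < ((n:ℝ)+3)^2 := by nlinarith
      nlinarith [h5', h6']
  have hprod : ∀ k, ∏ i ∈ Finset.range (k+1), (1 - τ i) = (τ k)^2 := by
    intro k
    induction k with
    | zero => rw [Finset.prod_range_one, hτ0]; linear_combination (-1/4 : ℝ) * h5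
    | succ n ih =>
      rw [Finset.prod_range_succ, ih]
      have := hid n; linarith [hid n]
  refine ⟨fun k => ⟨(hpos k).1, (hpos k).2⟩, hid, ?_⟩
  intro k
  cases k with
  | zero =>
    simp only [Nat.cast_zero, Finset.range_zero, Finset.prod_empty, mul_one]
    rw [show ((0:ℝ)+2)^2 = 4 by norm_num]
    linarith
  | succ n =>
    rw [hprod n]
    have h0 := (hpos n).1
    have hb := hbound n
    have hn : (0:ℝ) < ((n:ℝ) + 1 + 2)^2 := by positivity
    push_cast
    rw [le_div_iff₀ hn]
    have : τ n * ((n:ℝ) + 3) ≤ 2 := by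
      rw [le_div_iff₀ (by positivity : (0:ℝ) < (n:ℝ)+3)] at hb; linarith
    have hsq : (τ n * ((n:ℝ)+3))^2 ≤ 4 := by
      nlinarith [mul_nonneg h0.le (by positivity : (0:ℝ) ≤ (n:ℝ)+3)]
    have hfin := mul_le_mul_of_nonneg_left hsq hβ₀.le
    nlinarith [hfin]
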